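/- Let f, g ≥ 1 be integers and m = f + g, and regard M as a complex matrix. Then det(M − i·√(m−1)·I) = 0 and det(M + i·√(m−1)·I) = 0; that is, i·√(m−1) and −i·√(m−1) are (purely imaginary) eigenvalues of M over ℂ. -/

import Mathlib

/-- The transition matrix of the linearized min-sum message recursions within a
`(2m,0)` symmetric stabilizer, with `f` errors in one block and `g` in the other. -/
def Mmat (K : Type*) [Field K] (f g : K) : Matrix (Fin 4) (Fin 4) K :=
  !![0, -f, g - 1, 0;
     0, -(f - 1), g, 0;
     f - 1, 0, 0, -g;
     f, 0, 0, -(g - 1)]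

set_option maxHeartbeats 1000000 in
theorem my_det_fin_four {R : Type*} [CommRing R] (A : Matrix (Fin 4) (Fin 4) R) :
    A.det =
      A 0 0 * (A 1 1 * A 2 2 * A 3 3 - A 1 1 * A 2 3 * A 3 2 - A 1 2 * A 2 1 * A 3 3
        + A 1 2 * A 2 3 * A 3 1 + A 1 3 * A 2 1 * A 3 2 - A 1 3 * A 2 2 * A 3 1)
      - A 0 1 * (A 1 0 * A 2 2 * A 3 3 - A 1 0 * A 2 3 * A 3 2 - A 1 2 * A 2 0 * A 3 3
        + A 1 2 * A 2 3 * A 3 0 + A 1 3 * A 2 0 * A 3 2 - A 1 3 * A 2 2 * A 3 0)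
      + A 0 2 * (A 1 0 * A 2 1 * A 3 3 - A 1 0 * A 2 3 * A 3 1 - A 1 1 * A 2 0 * A 3 3
        + A 1 1 * A 2 3 * A 3 0 + A 1 3 * A 2 0 * A 3 1 - A 1 3 * A 2 1 * A 3 0)
      - A 0 3 * (A 1 0 * A 2 1 * A 3 2 - A 1 0 * A 2 2 * A 3 1 - A 1 1 * A 2 0 * A 3 2
        + A 1 1 * A 2 2 * A 3 0 + A 1 2 * A 2 0 * A 3 1 - A 1 2 * A 2 1 * A 3 0) := by
  rw [Matrix.det_succ_row_zero]
  simp [Fin.sum_univ_succ, Matrix.det_fin_three, Fin.lt_def,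
    show Fin.succAbove (2:Fin 4) (2:Fin 3) = 3 from rfl, show Fin.succAbove (3:Fin 4) (2:Fin 3) = 2 from rfl,
    show Fin.succAbove (1:Fin 4) (2:Fin 3) = 3 from rfl,
    show ((2:Fin 3).succ : Fin 4) = 3 from rfl, show ((2:Fin 3).castSucc : Fin 4) = 2 from rfl,
    show ((1:Fin 3).succ : Fin 4) = 2 from rfl, show ((0:Fin 3).succ : Fin 4) = 1 from rfl]
  ring

/-- Regarded as a complex matrix, `M` has the purely imaginary eigenvalues
`i·√(m-1)` and `-i·√(m-1)`, where `m = f + g`: the determinants of `M ∓ i·√(m-1)·I` vanish. -/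
theorem stmt_9 (f g : ℤ) (hf : 1 ≤ f) (hg : 1 ≤ g) :
    let M := Mmat ℂ (f : ℂ) (g : ℂ)
    let s : ℂ := (Real.sqrt ((f : ℝ) + (g : ℝ) - 1) : ℂ)
    (M - (Complex.I * s) • (1 : Matrix (Fin 4) (Fin 4) ℂ)).det = 0 ∧
    (M + (Complex.I * s) • (1 : Matrix (Fin 4) (Fin 4) ℂ)).det = 0 := by
  intro M s
  set lam : ℂ := Complex.I * s with hlam
  have hr : (0:ℝ) ≤ (f : ℝ) + (g : ℝ) - 1 := by
    have h1 : (1:ℝ) ≤ (f:ℝ) := by exact_mod_cast hf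
    have h2 : (1:ℝ) ≤ (g:ℝ) := by exact_mod_cast hg
    linarith
  have hs2 : s ^ 2 = ((f : ℂ) + (g : ℂ) - 1) := by
    have hq : (Real.sqrt ((f : ℝ) + (g : ℝ) - 1)) ^ 2 = (f : ℝ) + (g : ℝ) - 1 :=
      Real.sq_sqrt hr
    calc s ^ 2 = ((Real.sqrt ((f : ℝ) + (g : ℝ) - 1) ^ 2 : ℝ) : ℂ) := by push_cast; ring
    _ = (((f : ℝ) + (g : ℝ) - 1 : ℝ) : ℂ) := by rw [hq]
    _ = ((f : ℂ) + (g : ℂ) - 1) := by push_cast; ring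
  have h : lam ^ 2 = -((f : ℂ) + (g : ℂ) - 1) := by
    rw [hlam, mul_pow, Complex.I_sq, hs2]; ring
  constructor
  · show (M - lam • (1 : Matrix (Fin 4) (Fin 4) ℂ)).det = 0
    have hM : M - lam • (1 : Matrix (Fin 4) (Fin 4) ℂ) =
        !![-lam, -(f:ℂ), (g:ℂ) - 1, 0; 0, -((f:ℂ) - 1) - lam, (g:ℂ), 0;
           (f:ℂ) - 1, 0, -lam, -(g:ℂ); (f:ℂ), 0, 0, -((g:ℂ) - 1) - lam] := by
      ext i j
      fin_cases i <;> fin_cases j <;>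
        simp [M, Mmat, Matrix.one_apply, Matrix.vecHead, Matrix.vecTail]
    rw [hM, my_det_fin_four]
    simp [Matrix.of_apply]
    linear_combination (lam ^ 2 + ((f:ℂ) + g - 2) * lam - ((f:ℂ) + g - 1)) * h
  · show (M + lam • (1 : Matrix (Fin 4) (Fin 4) ℂ)).det = 0
    have hM : M + lam • (1 : Matrix (Fin 4) (Fin 4) ℂ) =
        !![lam, -(f:ℂ), (g:ℂ) - 1, 0; 0, -((f:ℂ) - 1) + lam, (g:ℂ), 0;
           (f:ℂ) - 1, 0, lam, -(g:ℂ); (f:ℂ), 0, 0, -((g:ℂ) - 1) + lam] := by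
      ext i j
      fin_cases i <;> fin_cases j <;>
        simp [M, Mmat, Matrix.one_apply, Matrix.vecHead, Matrix.vecTail]
    rw [hM, my_det_fin_four]
    simp [Matrix.of_apply]
    linear_combination (lam ^ 2 - ((f:ℂ) + g - 2) * lam - ((f:ℂ) + g - 1)) * h
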